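/- For every x ∈ Z^3 with x_1 ≥ 0, m̄(x) = m̄(0)·e^{−γ·x_1}, where m̄(0) denotes the value of m̄ at the origin (m̄ depends only on the first coordinate). -/

import Mathlib

open Real Filter

/-- Points of `ℤ³`. -/
abbrev Z3 : Type := ℤ × ℤ × ℤ

/-- Nearest-neighbor relation `x ∼ y`, i.e. `|x − y| = 1`. -/
def adj (x y : Z3) : Prop :=
  |x.1 - y.1| + |x.2.1 - y.2.1| + |x.2.2 - y.2.2| = 1

instance : DecidableRel adj := fun x y => by unfold adj; infer_instance

/-- The six nearest neighbors of a site. -/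
def nbrs (x : Z3) : Finset Z3 :=
  {(x.1 + 1, x.2), (x.1 - 1, x.2), (x.1, x.2.1 + 1, x.2.2), (x.1, x.2.1 - 1, x.2.2),
    (x.1, x.2.1, x.2.2 + 1), (x.1, x.2.1, x.2.2 - 1)}

/-- `h_x = h·1_{x₁<0}`. -/
noncomputable def hfun (h : ℝ) (x : Z3) : ℝ := if x.1 < 0 then h else 0

/-- One-step transition probability of simple random walk: `p(x,y) = (1/6)·1_{x∼y}`. -/
noncomputable def pker (x y : Z3) : ℝ := if adj x y then 1 / 6 else 0

/-- `n`-step transition probabilities: `p⁰(x,y) = 1_{x=y}`,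
`p^{n+1}(x,y) = Σ_z pⁿ(x,z)·p(z,y)`. -/
noncomputable def pn : ℕ → Z3 → Z3 → ℝ
  | 0, x, y => if x = y then 1 else 0
  | n + 1, x, y => ∑ z ∈ nbrs y, pn n x z * pker z y

/-- `ω = 6J/(1+6J)`. -/
noncomputable def om (J : ℝ) : ℝ := 6 * J / (1 + 6 * J)

/-- `m̄(x) = Σ_{n≥0} ωⁿ Σ_{y∈ℤ³} pⁿ(x,y)·h_y/(1+6J)`. -/
noncomputable def mbar (J h : ℝ) (x : Z3) : ℝ :=
  ∑' n : ℕ, om J ^ n * ∑' y : Z3, pn n x y * hfun h y / (1 + 6 * J)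

/-- the inverse hyperbolic cosine on `[1, ∞)`: `arccosh y = log (y + √(y² − 1))`. -/
noncomputable def arccosh (y : ℝ) : ℝ := Real.log (y + Real.sqrt (y ^ 2 - 1))

/-- `γ = arccosh(1 + 1/(2J))`, the unique positive solution of `3 = (6J/(1+6J))(2 + cosh γ)`. -/
noncomputable def gam (J : ℝ) : ℝ := arccosh (1 + 1 / (2 * J))

/-! ### Auxiliary material -/

lemma mem_nbrs {z y : Z3} : z ∈ nbrs y ↔ adj z y := by
  obtain ⟨a, b, c⟩ := z
  obtain ⟨p, q, s⟩ := y
  simp only [nbrs, adj, Finset.mem_insert, Finset.mem_singleton, Prod.mk.injEq]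
  rcases abs_cases (a - p) with ⟨h1, h1'⟩ | ⟨h1, h1'⟩ <;>
    rcases abs_cases (b - q) with ⟨h2, h2'⟩ | ⟨h2, h2'⟩ <;>
      rcases abs_cases (c - s) with ⟨h3, h3'⟩ | ⟨h3, h3'⟩ <;>
        rw [h1, h2, h3] <;> omega

lemma nbrs_symm {z y : Z3} : z ∈ nbrs y ↔ y ∈ nbrs z := by
  rw [mem_nbrs, mem_nbrs]
  unfold adj
  rw [abs_sub_comm, abs_sub_comm (z.2.1), abs_sub_comm (z.2.2)]

/-- A box of radius `n` around `x`. -/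
noncomputable def box (x : Z3) (n : ℕ) : Finset Z3 :=
  Finset.Icc (x.1 - n) (x.1 + n) ×ˢ
    (Finset.Icc (x.2.1 - n) (x.2.1 + n) ×ˢ Finset.Icc (x.2.2 - n) (x.2.2 + n))

lemma mem_box {x y : Z3} {n : ℕ} :
    y ∈ box x n ↔ (x.1 - n ≤ y.1 ∧ y.1 ≤ x.1 + n) ∧ (x.2.1 - n ≤ y.2.1 ∧ y.2.1 ≤ x.2.1 + n) ∧
      (x.2.2 - n ≤ y.2.2 ∧ y.2.2 ≤ x.2.2 + n) := by
  simp [box, Finset.mem_product, Finset.mem_Icc]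

lemma pn_support : ∀ (n : ℕ) (x y : Z3), y ∉ box x n → pn n x y = 0 := by
  intro n
  induction n with
  | zero =>
    intro x y hy
    have : x ≠ y := by
      rintro rfl
      exact hy (mem_box.2 (by push_cast; omega))
    simp [pn, this]
  | succ n ih =>
    intro x y hy
    show (∑ z ∈ nbrs y, pn n x z * pker z y) = 0
    apply Finset.sum_eq_zero
    intro z hz
    have hadj := mem_nbrs.1 hz
    have hz' : z ∉ box x n := by
      intro hzb
      apply hy
      rw [mem_box] at hzb ⊢
      unfold adj at hadj
      rcases abs_cases (z.1 - y.1) with ⟨h1, _⟩ | ⟨h1, _⟩ <;>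
        rcases abs_cases (z.2.1 - y.2.1) with ⟨h2, _⟩ | ⟨h2, _⟩ <;>
          rcases abs_cases (z.2.2 - y.2.2) with ⟨h3, _⟩ | ⟨h3, _⟩ <;>
            push_cast at hzb ⊢ <;> omega
    rw [ih x z hz', zero_mul]

lemma box_mono {x : Z3} {n : ℕ} : box x n ⊆ box x (n + 1) := by
  intro y hy
  rw [mem_box] at hy ⊢
  push_cast at hy ⊢
  omega

lemma nbrs_subset_box {x z y : Z3} {n : ℕ} (hz : z ∈ box x n) (hy : y ∈ nbrs z) :
    y ∈ box x (n + 1) := by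
  have hadj := mem_nbrs.1 hy
  rw [mem_box] at hz ⊢
  unfold adj at hadj
  rcases abs_cases (y.1 - z.1) with ⟨h1, _⟩ | ⟨h1, _⟩ <;>
    rcases abs_cases (y.2.1 - z.2.1) with ⟨h2, _⟩ | ⟨h2, _⟩ <;>
      rcases abs_cases (y.2.2 - z.2.2) with ⟨h3, _⟩ | ⟨h3, _⟩ <;>
        push_cast at hz ⊢ <;> omega

lemma sum_indicator_nbrs {s : Finset Z3} {w : Z3} {F : Z3 → ℝ}
    (h0 : ∀ z ∈ nbrs w, z ∉ s → F z = 0) :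
    (∑ z ∈ s, if z ∈ nbrs w then F z else 0) = ∑ z ∈ nbrs w, F z := by
  rw [Finset.sum_ite_mem]
  exact Finset.sum_subset Finset.inter_subset_right
    (fun z hz hzn => h0 z hz (fun hs => hzn (Finset.mem_inter.2 ⟨hs, hz⟩)))

lemma sum_nbrs_g (z : Z3) (g : ℤ → ℝ) :
    (∑ y ∈ nbrs z, g y.1) = g (z.1 - 1) + g (z.1 + 1) + 4 * g z.1 := by
  obtain ⟨a, b, c⟩ := z
  show (∑ y ∈ ({((a+1 : ℤ), b, c), (a-1, b, c), (a, b+1, c), (a, b-1, c),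
      (a, b, c+1), (a, b, c-1)} : Finset Z3), g y.1) = _
  rw [Finset.sum_insert (by simp [Prod.ext_iff] <;> omega),
      Finset.sum_insert (by simp [Prod.ext_iff] <;> omega),
      Finset.sum_insert (by simp [Prod.ext_iff] <;> omega),
      Finset.sum_insert (by simp [Prod.ext_iff] <;> omega),
      Finset.sum_insert (by simp [Prod.ext_iff] <;> omega),
      Finset.sum_singleton]
  show g (a+1) + (g (a-1) + (g a + (g a + (g a + g a)))) = _
  ring

/-- The 1-d lazy walk operator. -/
noncomputable def Lop (g : ℤ → ℝ) : ℤ → ℝ := fun k => (g (k - 1) + g (k + 1) + 4 * g k) / 6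

noncomputable def TnI : ℕ → (ℤ → ℝ) → ℤ → ℝ
  | 0, g => g
  | n + 1, g => TnI n (Lop g)

lemma stepA (n : ℕ) (x : Z3) (g : ℤ → ℝ) :
    ∑' y, pn (n + 1) x y * g y.1 = ∑' z, pn n x z * Lop g z.1 := by
  have hsup1 : ∀ y : Z3, y ∉ box x (n + 1) → pn (n + 1) x y * g y.1 = 0 := fun y hy => by
    rw [pn_support _ _ _ hy, zero_mul]
  have hsup2 : ∀ z : Z3, z ∉ box x (n + 1) → pn n x z * Lop g z.1 = 0 := fun z hz => by
    rw [pn_support n x z (fun hb => hz (box_mono hb)), zero_mul]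
  rw [tsum_eq_sum (s := box x (n + 1)) hsup1, tsum_eq_sum (s := box x (n + 1)) hsup2]
  calc (∑ y ∈ box x (n + 1), pn (n + 1) x y * g y.1)
      = ∑ y ∈ box x (n + 1), ∑ z ∈ nbrs y, pn n x z * (1 / 6) * g y.1 := by
        refine Finset.sum_congr rfl fun y _ => ?_
        show (∑ z ∈ nbrs y, pn n x z * pker z y) * g y.1 = _
        rw [Finset.sum_mul]
        refine Finset.sum_congr rfl fun z hz => ?_
        rw [pker, if_pos (mem_nbrs.1 hz)]
    _ = ∑ y ∈ box x (n + 1), ∑ z ∈ box x (n + 1),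
          (if z ∈ nbrs y then pn n x z * (1 / 6) * g y.1 else 0) := by
        refine Finset.sum_congr rfl fun y _ => ?_
        rw [sum_indicator_nbrs]
        intro z _ hzs
        rw [pn_support n x z (fun hb => hzs (box_mono hb)), zero_mul, zero_mul]
    _ = ∑ z ∈ box x (n + 1), ∑ y ∈ box x (n + 1),
          (if y ∈ nbrs z then pn n x z * (1 / 6) * g y.1 else 0) := by
        rw [Finset.sum_comm]
        refine Finset.sum_congr rfl fun z _ => Finset.sum_congr rfl fun y _ => ?_
        simp_rw [nbrs_symm]
    _ = ∑ z ∈ box x (n + 1), ∑ y ∈ nbrs z, pn n x z * (1 / 6) * g y.1 := by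
        refine Finset.sum_congr rfl fun z _ => ?_
        apply sum_indicator_nbrs
        intro y hy hys
        by_cases hp : pn n x z = 0
        · rw [hp, zero_mul, zero_mul]
        · exact absurd (nbrs_subset_box (by by_contra hb; exact hp (pn_support n x z hb)) hy) hys
    _ = ∑ z ∈ box x (n + 1), pn n x z * Lop g z.1 := by
        refine Finset.sum_congr rfl fun z _ => ?_
        rw [show (∑ y ∈ nbrs z, pn n x z * (1 / 6) * g y.1)
            = pn n x z * (1 / 6) * ∑ y ∈ nbrs z, g y.1 from (Finset.mul_sum _ _ _).symm,
          sum_nbrs_g]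
        unfold Lop
        ring

lemma pn_tsum : ∀ (n : ℕ) (g : ℤ → ℝ) (x : Z3),
    ∑' y, pn n x y * g y.1 = TnI n g x.1 := by
  intro n
  induction n with
  | zero =>
    intro g x
    rw [tsum_eq_single x (fun y hy => by simp [pn, (Ne.symm hy : ¬x = y)])]
    simp [pn, TnI]
  | succ n ih =>
    intro g x
    rw [stepA n x g, ih (Lop g) x]
    rfl

lemma TnI_comm (n : ℕ) : ∀ g : ℤ → ℝ, TnI n (Lop g) = Lop (TnI n g) := by
  induction n with
  | zero => intro g; rfl
  | succ n ih => intro g; exact ih (Lop g)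

lemma TnI_bound (C : ℝ) : ∀ (n : ℕ) (g : ℤ → ℝ), (∀ k, |g k| ≤ C) → ∀ k, |TnI n g k| ≤ C := by
  intro n
  induction n with
  | zero => intro g hg k; exact hg k
  | succ n ih =>
    intro g hg k
    refine ih (Lop g) (fun j => ?_) k
    have h1 := hg (j - 1)
    have h2 := hg (j + 1)
    have h3 := hg j
    have hC : 0 ≤ C := le_trans (abs_nonneg _) h3
    have : |g (j - 1) + g (j + 1) + 4 * g j| ≤ 6 * C := by
      calc |g (j - 1) + g (j + 1) + 4 * g j|
          ≤ |g (j - 1) + g (j + 1)| + |4 * g j| := abs_add_le _ _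
        _ ≤ |g (j - 1)| + |g (j + 1)| + 4 * |g j| := by
            rw [abs_mul]
            have := abs_add_le (g (j - 1)) (g (j + 1))
            norm_num
            linarith
        _ ≤ 6 * C := by linarith
    show |(g (j - 1) + g (j + 1) + 4 * g j) / 6| ≤ C
    rw [abs_div]
    norm_num
    linarith

section Main

variable {J h : ℝ}

noncomputable def h1f (J h : ℝ) : ℤ → ℝ := fun k => (if k < 0 then h else 0) / (1 + 6 * J)

noncomputable def Ff (J h : ℝ) : ℤ → ℝ := fun k => ∑' n : ℕ, om J ^ n * TnI n (h1f J h) k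

lemma mbar_eq_Ff (J h : ℝ) (x : Z3) : mbar J h x = Ff J h x.1 := by
  unfold mbar Ff
  refine tsum_congr fun n => ?_
  congr 1
  rw [← pn_tsum n (h1f J h) x]
  refine tsum_congr fun y => ?_
  rw [mul_div_assoc]
  rfl

variable (hJ : 0 < J) (hh : h < 0)

lemma hden_pos (hJ : 0 < J) : (0 : ℝ) < 1 + 6 * J := by linarith

lemma om_pos (hJ : 0 < J) : 0 < om J := by
  unfold om; positivity

lemma om_lt_one (hJ : 0 < J) : om J < 1 := by
  unfold om
  rw [div_lt_one (hden_pos hJ)]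
  linarith

lemma h1f_bound (hJ : 0 < J) : ∀ k, |h1f J h k| ≤ |h| / (1 + 6 * J) := by
  intro k
  unfold h1f
  rw [abs_div, abs_of_pos (hden_pos hJ)]
  rw [div_le_div_iff_of_pos_right (hden_pos hJ)]
  split
  · exact le_refl _
  · simp

lemma summF_per (hJ : 0 < J) (k : ℤ) (n : ℕ) :
    |om J ^ n * TnI n (h1f J h) k| ≤ om J ^ n * (|h| / (1 + 6 * J)) := by
  rw [abs_mul, abs_pow, abs_of_pos (om_pos hJ)]
  exact mul_le_mul_of_nonneg_left
    (TnI_bound (|h| / (1 + 6 * J)) n (h1f J h) (h1f_bound hJ) k)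
    (pow_nonneg (om_pos hJ).le n)

lemma geo_summ (hJ : 0 < J) : Summable (fun n : ℕ => om J ^ n * (|h| / (1 + 6 * J))) :=
  (summable_geometric_of_lt_one (om_pos hJ).le (om_lt_one hJ)).mul_right _

lemma summF_abs (hJ : 0 < J) (k : ℤ) :
    Summable fun n : ℕ => |om J ^ n * TnI n (h1f J h) k| :=
  Summable.of_nonneg_of_le (fun n => abs_nonneg _) (summF_per hJ k) (geo_summ hJ)

lemma summF (hJ : 0 < J) (k : ℤ) : Summable fun n : ℕ => om J ^ n * TnI n (h1f J h) k := by
  exact Summable.of_norm (f := fun n : ℕ => om J ^ n * TnI n (h1f J h) k)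
    (by simpa only [Real.norm_eq_abs] using summF_abs hJ k)

lemma Ff_bound (hJ : 0 < J) :
    ∀ k, |Ff J h k| ≤ ∑' n : ℕ, om J ^ n * (|h| / (1 + 6 * J)) := by
  intro k
  have h1 : |Ff J h k| ≤ ∑' n : ℕ, |om J ^ n * TnI n (h1f J h) k| := by
    unfold Ff
    simpa only [Real.norm_eq_abs] using
      norm_tsum_le_tsum_norm (f := fun n : ℕ => om J ^ n * TnI n (h1f J h) k)
        (by simpa only [Real.norm_eq_abs] using summF_abs hJ k)
  exact h1.trans (Summable.tsum_le_tsum (summF_per hJ k) (summF_abs hJ k) (geo_summ hJ))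

lemma Ff_rec (hJ : 0 < J) (k : ℤ) :
    Ff J h k = h1f J h k +
      om J / 6 * (Ff J h (k - 1) + Ff J h (k + 1) + 4 * Ff J h k) := by
  have hsplit : Ff J h k = om J ^ 0 * TnI 0 (h1f J h) k +
      ∑' n : ℕ, om J ^ (n + 1) * TnI (n + 1) (h1f J h) k := by
    exact Summable.tsum_eq_zero_add (summF (h := h) hJ k)
  have hterm : ∀ n : ℕ, om J ^ (n + 1) * TnI (n + 1) (h1f J h) k
      = om J / 6 * (om J ^ n * TnI n (h1f J h) (k - 1))
        + (om J / 6 * (om J ^ n * TnI n (h1f J h) (k + 1))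
        + om J / 6 * (4 * (om J ^ n * TnI n (h1f J h) k))) := by
    intro n
    have : TnI (n + 1) (h1f J h) = Lop (TnI n (h1f J h)) := TnI_comm n (h1f J h)
    rw [show TnI (n + 1) (h1f J h) k = Lop (TnI n (h1f J h)) k from congrFun this k]
    unfold Lop
    rw [pow_succ]
    ring
  have hs1 := summF (h := h) hJ (k - 1)
  have hs2 := summF (h := h) hJ (k + 1)
  have hs3 := summF (h := h) hJ k
  have e1 : (∑' n : ℕ, om J ^ (n + 1) * TnI (n + 1) (h1f J h) k)
      = ∑' n : ℕ, (om J / 6 * (om J ^ n * TnI n (h1f J h) (k - 1))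
        + (om J / 6 * (om J ^ n * TnI n (h1f J h) (k + 1))
        + om J / 6 * (4 * (om J ^ n * TnI n (h1f J h) k)))) := tsum_congr hterm
  nth_rewrite 1 [hsplit]
  rw [e1,
    Summable.tsum_add (hs1.mul_left _) ((hs2.mul_left _).add ((hs3.mul_left 4).mul_left _)),
    Summable.tsum_add (hs2.mul_left _) ((hs3.mul_left 4).mul_left _),
    tsum_mul_left, tsum_mul_left, tsum_mul_left, tsum_mul_left]
  show om J ^ 0 * TnI 0 (h1f J h) k + _ = _
  rw [pow_zero, one_mul]
  show h1f J h k + _ = _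
  unfold Ff
  ring

lemma Ff_step (hJ : 0 < J) (k : ℤ) (hk : 0 ≤ k) :
    Ff J h (k + 1) = (2 + 1 / J) * Ff J h k - Ff J h (k - 1) := by
  have e := Ff_rec (h := h) hJ k
  have h0 : h1f J h k = 0 := by
    unfold h1f
    rw [if_neg (by omega), zero_div]
  rw [h0, zero_add] at e
  have hJ' : J ≠ 0 := ne_of_gt hJ
  have hden : (1 : ℝ) + 6 * J ≠ 0 := ne_of_gt (hden_pos hJ)
  unfold om at e
  field_simp at e ⊢
  linarith

end Main

theorem statement10 (J h : ℝ) (hJ : 0 < J) (hh : h < 0) :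
    ∀ x : Z3, 0 ≤ x.1 →
      mbar J h x = mbar J h (0, 0, 0) * Real.exp (-gam J * (x.1 : ℝ)) := by
  intro x hx
  have hJ' : J ≠ 0 := ne_of_gt hJ
  obtain ⟨c, hc_def⟩ : ∃ c : ℝ, c = 1 + 1 / (2 * J) := ⟨_, rfl⟩
  have hc1 : 1 < c := by
    have h0 : 0 < 1 / (2 * J) := by positivity
    rw [hc_def]; linarith
  have hc2 : (0:ℝ) ≤ c ^ 2 - 1 := by nlinarith
  obtain ⟨s, hs_def⟩ : ∃ s : ℝ, s = Real.sqrt (c ^ 2 - 1) := ⟨_, rfl⟩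
  have hs0 : 0 ≤ s := hs_def ▸ Real.sqrt_nonneg _
  have hs2 : s ^ 2 = c ^ 2 - 1 := by rw [hs_def]; exact Real.sq_sqrt hc2
  have hcs : 1 < c + s := by linarith
  have hexp : Real.exp (gam J) = c + s := by
    rw [gam, arccosh, ← hc_def, ← hs_def, Real.exp_log (by linarith)]
  obtain ⟨r, hr_def⟩ : ∃ r : ℝ, r = Real.exp (-gam J) := ⟨_, rfl⟩
  have hr0 : 0 < r := hr_def ▸ Real.exp_pos _
  have hrne : r ≠ 0 := ne_of_gt hr0
  have hrinv : r = (c + s)⁻¹ := by rw [hr_def, Real.exp_neg, hexp]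
  have hr1 : r < 1 := by
    rw [hrinv]
    exact inv_lt_one_of_one_lt₀ hcs
  have h2c : 2 + 1 / J = 2 * c := by rw [hc_def]; field_simp
  have key : r ^ 2 + 1 = (2 + 1 / J) * r := by
    rw [h2c, hrinv]
    have hcs0 : c + s ≠ 0 := by linarith
    field_simp
    nlinarith [hs2]
  have hmul : r * r⁻¹ = 1 := mul_inv_cancel₀ hrne
  have key' : (r⁻¹) ^ 2 + 1 = (2 + 1 / J) * r⁻¹ := by
    linear_combination r⁻¹ ^ 2 * key - (r * r⁻¹ + 1 - (2 + 1 / J) * r⁻¹) * hmul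
  have h1r : 1 < r⁻¹ := by nlinarith
  have hDpos : (0:ℝ) < r⁻¹ - r := by linarith
  obtain ⟨M, hM⟩ : ∃ M, ∀ k, |Ff J h k| ≤ M := ⟨_, Ff_bound (h := h) hJ⟩
  obtain ⟨B, hBD⟩ : ∃ B : ℝ, B * (r⁻¹ - r) = Ff J h 1 - Ff J h 0 * r :=
    ⟨_, div_mul_cancel₀ _ (ne_of_gt hDpos)⟩
  obtain ⟨A, hA⟩ : ∃ A : ℝ, A = Ff J h 0 - B := ⟨_, rfl⟩
  have claim : ∀ n : ℕ, Ff J h (n : ℤ) = A * r ^ n + B * (r⁻¹) ^ n ∧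
      Ff J h ((n : ℤ) + 1) = A * r ^ (n + 1) + B * (r⁻¹) ^ (n + 1) := by
    intro n
    induction n with
    | zero =>
      constructor
      · simp only [Nat.cast_zero, pow_zero, mul_one]
        rw [hA]; ring
      · simp only [Nat.cast_zero, zero_add, pow_one]
        linear_combination (-r) * hA - hBD
    | succ n ih =>
      obtain ⟨e1, e2⟩ := ih
      constructor
      · push_cast
        exact e2
      · push_cast
        have hstep := Ff_step (h := h) hJ ((n : ℤ) + 1) (by omega)
        rw [show ((n : ℤ) + 1 - 1) = (n : ℤ) by ring] at hstep
        rw [hstep, e2, e1]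
        linear_combination (-(A * r ^ n)) * key - (B * (r⁻¹) ^ n) * key'
  have hBzero : B = 0 := by
    by_contra hB
    obtain ⟨n, hn⟩ := pow_unbounded_of_one_lt ((M + |A|) / |B|) h1r
    have hBpos : 0 < |B| := abs_pos.mpr hB
    have hpow : (0:ℝ) ≤ r⁻¹ ^ n := pow_nonneg (by positivity) n
    have h1 : |B| * r⁻¹ ^ n ≤ M + |A| := by
      have hc := (claim n).1
      have heq : B * r⁻¹ ^ n = Ff J h (n : ℤ) - A * r ^ n := by linarith
      have h2 : |A * r ^ n| ≤ |A| := by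
        rw [abs_mul, abs_of_nonneg (pow_nonneg hr0.le n)]
        have h3 : r ^ n ≤ 1 := pow_le_one₀ hr0.le hr1.le
        nlinarith [abs_nonneg A, pow_nonneg hr0.le n]
      calc |B| * r⁻¹ ^ n = |B * r⁻¹ ^ n| := by
            rw [abs_mul, abs_of_nonneg hpow]
        _ = |Ff J h (n : ℤ) - A * r ^ n| := by rw [heq]
        _ ≤ |Ff J h (n : ℤ)| + |A * r ^ n| := abs_sub _ _
        _ ≤ M + |A| := add_le_add (hM _) h2
    rw [div_lt_iff₀ hBpos] at hn
    nlinarith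
  obtain ⟨n, hn⟩ : ∃ n : ℕ, x.1 = (n : ℤ) := ⟨x.1.toNat, (Int.toNat_of_nonneg hx).symm⟩
  have hFn : Ff J h (n : ℤ) = Ff J h 0 * r ^ n := by
    have hcl := (claim n).1
    rw [hBzero] at hcl hA
    rw [hcl, hA]
    ring
  have hF0 : mbar J h ((0 : ℤ), (0 : ℤ), (0 : ℤ)) = Ff J h 0 := mbar_eq_Ff J h (0, 0, 0)
  rw [mbar_eq_Ff J h x, hn, hFn, hF0]
  congr 1
  push_cast
  rw [show -gam J * (n : ℝ) = (n : ℝ) * -gam J by ring, Real.exp_nat_mul, ← hr_def]
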